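/- If D is a uniform ultrafilter on κ that is not separative, and I is a linear order of cardinality λ ≥ κ, then the ultrapower I^κ/D is not (λ,2)-entangled. -/

import Mathlib

open Cardinal

universe u

/-- Proposition 6.10: if `D` is a uniform, non-separative ultrafilter on `κ`
    and `I` is a linear order of cardinality `λ ≥ κ`, then the ultrapower
    `I^κ/D` is not (λ,2)-entangled. -/
theorem stmt_13 (κ : Type u) (D : Ultrafilter κ)
    (huniform : ∀ A : Set κ, A ∈ D → #A = #κ)
    (hnotsep : ¬∀ a b : κ → κ, (∀ i, a i ≠ b i) →
      ∃ A ∈ D, (a '' A) ∩ (b '' A) = ∅)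
    (lam : Cardinal.{u}) (I : Type u) [LinearOrder I]
    (hI : #I = lam) (hκlam : #κ ≤ lam) :
    ¬∀ t : Fin 2 → lam.ord.ToType → κ → I,
      (∀ (e : Fin 2) (α β : lam.ord.ToType), α ≠ β →
        {i | t e α i = t e β i} ∉ D) →
      ∃ α β : lam.ord.ToType, α < β ∧
        {i | t 0 α i < t 0 β i} ∈ D ∧ {i | t 1 β i < t 1 α i} ∈ D := by
  push_neg at hnotsep
  obtain ⟨a, b, hab, hins⟩ := hnotsep
  -- κ must be infinite, else D is principal and a,b would be separated
  have hinf : Infinite κ := by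
    by_contra hfin
    have : Finite κ := not_infinite_iff_finite.mp hfin
    obtain ⟨x, hx⟩ := D.eq_pure_of_finite
    have h1 : ({x} : Set κ) ∈ D := by rw [hx]; exact Filter.singleton_mem_pure
    have := hins {x} h1
    rw [Set.image_singleton, Set.image_singleton] at this
    obtain ⟨j, hj1, hj2⟩ := this
    exact hab x ((hj1.symm.trans hj2 : a x = b x))
  have hlaminf : ℵ₀ ≤ lam := le_trans (Cardinal.infinite_iff.mp hinf) hκlam
  -- an injection g : lam.ord.toType × κ → I
  have hcard : #(lam.ord.ToType × κ) ≤ #I := by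
    rw [Cardinal.mk_prod, hI]
    simp only [Cardinal.lift_id]
    rw [Cardinal.mk_ord_toType]
    exact le_of_eq (Cardinal.mul_eq_left hlaminf hκlam (Cardinal.mk_ne_zero κ))
  obtain ⟨g⟩ := Cardinal.le_def _ _ |>.mp hcard
  intro H
  obtain ⟨α, β, _, hA, hB⟩ := H (fun e α i => g ⟨α, (if e = 0 then a else b) i⟩)
    (by
      intro e α β hne C
      have : {i | g ⟨α, (if e = 0 then a else b) i⟩ = g ⟨β, (if e = 0 then a else b) i⟩} = ∅ := by
        ext i
        simp only [Set.mem_setOf_eq, Set.mem_empty_iff_false, iff_false]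
        intro h
        exact hne (congrArg Prod.fst (g.injective h))
      rw [this] at C
      exact Filter.empty_notMem (D : Filter κ) C)
  simp only [Fin.isValue, reduceIte, show ((1 : Fin 2) = 0) = False from by simp] at hA hB
  have hC : {i | g ⟨α, a i⟩ < g ⟨β, a i⟩} ∩ {i | g ⟨β, b i⟩ < g ⟨α, b i⟩} ∈ D :=
    Filter.inter_mem hA hB
  obtain ⟨j, ⟨i₁, hi₁, hi₁j⟩, ⟨i₂, hi₂, hi₂j⟩⟩ := hins _ hC
  have h1 : g ⟨α, j⟩ < g ⟨β, j⟩ := hi₁j ▸ hi₁.1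
  have h2 : g ⟨β, j⟩ < g ⟨α, j⟩ := hi₂j ▸ hi₂.2
  exact lt_asymm h1 h2
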